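/- For every integer n ≥ 4, the cardinality of the image of 𝒩 under the counting operator is |s(𝒩)| = C(2n−1, n) − n − 1, where C denotes the binomial coefficient. -/

import Mathlib

/-- The counting operator: `countOp n x j` is the number of indices `i` with `x i = j`. -/
def countOp (n : ℕ) (x : Fin n → ℕ) : Fin n → ℕ :=
  fun j => (Finset.univ.filter fun i => x i = (j : ℕ)).card

/-- `𝒩`: the set of `n`-chains that are neither constant nor injective. -/
def NSet (n : ℕ) : Set (Fin n → ℕ) :=
  {x | (∀ i, x i < n) ∧ (¬ ∃ c, ∀ i, x i = c) ∧ ¬ Function.Injective x}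

lemma card_antidiagonalTuple (k m : ℕ) :
    (Finset.Nat.antidiagonalTuple k m).card = (k + m - 1).choose m := by
  classical
  have e : (Finset.Nat.antidiagonalTuple k m) ≃ Sym (Fin k) m :=
    { toFun := fun y => ⟨∑ j : Fin k, Multiset.replicate (y.1 j) j, by
        have hy := Finset.Nat.mem_antidiagonalTuple.mp y.2
        have hc : Multiset.card (∑ j : Fin k, Multiset.replicate (y.1 j) j)
            = ∑ j : Fin k, Multiset.card (Multiset.replicate (y.1 j) j) :=
          map_sum (⟨⟨Multiset.card, Multiset.card_zero⟩, Multiset.card_add⟩ :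
            Multiset (Fin k) →+ ℕ) _ Finset.univ
        rw [hc]
        simpa using hy⟩
      invFun := fun s => ⟨fun j => s.1.count j, by
        rw [Finset.Nat.mem_antidiagonalTuple]
        have h1 : ∑ j : Fin k, s.1.count j = ∑ j ∈ s.1.toFinset, s.1.count j := by
          refine (Finset.sum_subset (Finset.subset_univ _) ?_).symm
          intro a _ ha
          simpa [Multiset.count_eq_zero] using fun h => ha (Multiset.mem_toFinset.mpr h)
        rw [h1, Multiset.toFinset_sum_count_eq, s.2]⟩
      left_inv := by
        rintro ⟨y, hy⟩
        ext j
        simp [Multiset.count_sum', Multiset.count_replicate, Finset.sum_ite_eq']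
      right_inv := by
        rintro ⟨s, hs⟩
        refine Subtype.ext ?_
        show (∑ j : Fin k, Multiset.replicate (Multiset.count j s) j) = s
        have h1 : ∑ j : Fin k, Multiset.replicate (s.count j) j
            = ∑ j ∈ s.toFinset, Multiset.replicate (s.count j) j := by
          refine (Finset.sum_subset (Finset.subset_univ _) ?_).symm
          intro a _ ha
          have : s.count a = 0 := by
            simpa [Multiset.count_eq_zero] using fun h => ha (Multiset.mem_toFinset.mpr h)
          simp [this]
        rw [h1]
        simpa [← Multiset.nsmul_singleton] using Multiset.toFinset_sum_count_nsmul_eq s }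
  rw [← Fintype.card_coe, Fintype.card_congr e, Sym.card_sym_eq_multichoose,
    Fintype.card_fin, Nat.multichoose_eq]

lemma count_get (l : List ℕ) (c : ℕ) :
    (Finset.univ.filter fun i : Fin l.length => l.get i = c).card = l.count c := by
  rw [Finset.card_filter]
  induction l with
  | nil => simp
  | cons a t ih =>
    simp only [List.length_cons]
    rw [Fin.sum_univ_succ]
    simp only [List.get_eq_getElem, Fin.val_zero, List.getElem_cons_zero, Fin.val_succ,
      List.getElem_cons_succ, List.count_cons]
    simp only [List.get_eq_getElem] at ih
    rw [ih]
    by_cases h : a = c <;> simp [h] <;> omega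

lemma count_get' (n : ℕ) (l : List ℕ) (h : l.length = n) (c : ℕ) :
    (Finset.univ.filter fun i : Fin n => l.get (Fin.cast h.symm i) = c).card = l.count c := by
  subst h
  simpa using count_get l c

theorem card_image_NSet (n : ℕ) (hn : 4 ≤ n) :
    (countOp n '' NSet n).ncard = (2 * n - 1).choose n - n - 1 := by
  classical
  set ones : Fin n → ℕ := fun _ => 1 with hones
  set delta : Fin n → (Fin n → ℕ) := fun c j => if j = c then n else 0 with hdelta
  set E : Finset (Fin n → ℕ) := insert ones (Finset.univ.image delta) with hE
  set T : Finset (Fin n → ℕ) := Finset.Nat.antidiagonalTuple n n \ E with hT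
  have himg : countOp n '' NSet n = ↑T := by
    ext y
    constructor
    · rintro ⟨x, ⟨hlt, hnc, hni⟩, rfl⟩
      have hsum : ∑ j : Fin n, countOp n x j = n := by
        have h0 := Finset.card_eq_sum_card_fiberwise
          (f := x) (s := Finset.univ) (t := Finset.range n)
          (fun i _ => Finset.mem_range.mpr (hlt i))
        rw [Finset.card_univ, Fintype.card_fin] at h0
        rw [show (fun j : Fin n => countOp n x j) = fun j : Fin n =>
          (Finset.univ.filter fun i => x i = (j : ℕ)).card from rfl]
        rw [Fin.sum_univ_eq_sum_range (fun b => (Finset.univ.filter fun i => x i = b).card) n]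
        exact h0.symm
      refine Finset.mem_coe.mpr (Finset.mem_sdiff.mpr
        ⟨Finset.Nat.mem_antidiagonalTuple.mpr hsum, ?_⟩)
      intro hmem
      rcases Finset.mem_insert.mp hmem with h1 | h2
      · simp only [Function.Injective, not_forall] at hni
        obtain ⟨i1, i2, heq, hne⟩ := hni
        have h2le : 2 ≤ countOp n x ⟨x i1, hlt i1⟩ := by
          refine Finset.one_lt_card.mpr ⟨i1, ?_, i2, ?_, hne⟩ <;>
            simp [heq]
        rw [h1] at h2le
        simp [hones] at h2le
      · obtain ⟨c, -, hc⟩ := Finset.mem_image.mp h2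
        apply hnc
        refine ⟨(c : ℕ), fun i => ?_⟩
        by_contra hxi
        have h1le : 1 ≤ countOp n x ⟨x i, hlt i⟩ :=
          Finset.card_pos.mpr ⟨i, by simp⟩
        rw [← hc] at h1le
        have : (⟨x i, hlt i⟩ : Fin n) ≠ c := fun h => hxi (by
          simpa using congrArg Fin.val h)
        simp [hdelta, this] at h1le
    · intro hy
      obtain ⟨hyA, hyE⟩ := Finset.mem_sdiff.mp (Finset.mem_coe.mp hy)
      have hsum : ∑ j : Fin n, y j = n := Finset.Nat.mem_antidiagonalTuple.mp hyA
      have hyones : y ≠ ones := fun h => hyE (by rw [h]; exact Finset.mem_insert_self _ _)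
      have hydelta : ∀ c, y ≠ delta c := fun c h => hyE (by
        rw [h]; exact Finset.mem_insert_of_mem (Finset.mem_image_of_mem _ (Finset.mem_univ c)))
      set L : List ℕ := (List.finRange n).flatMap (fun j => List.replicate (y j) (j : ℕ)) with hLdef
      have hL : L.length = n := by
        rw [hLdef, List.length_flatMap]
        rw [show ((List.map (fun j => (List.replicate (y j) (j : ℕ)).length)
          (List.finRange n)).sum) = ∑ j : Fin n, y j from ?_]
        · exact hsum
        · rw [Fin.sum_univ_def]
          congr 1
          exact List.map_congr_left fun j _ => by simp
      set x : Fin n → ℕ := fun i => L.get (Fin.cast hL.symm i) with hx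
      have hcount : ∀ j : Fin n, countOp n x j = y j := by
        intro j
        have h1 : countOp n x j = L.count (j : ℕ) := count_get' n L hL (j : ℕ)
        rw [h1, hLdef, List.count_flatMap]
        rw [show (List.map (List.count (↑j) ∘ fun j' : Fin n => List.replicate (y j') (↑j' : ℕ))
          (List.finRange n)).sum = ∑ j' : Fin n, List.count (↑j : ℕ) (List.replicate (y j') ↑j')
          from (Fin.sum_univ_def _).symm]
        simp only [List.count_replicate, beq_iff_eq, Fin.val_eq_val]
        simp [Finset.sum_ite_eq']
      have hlt : ∀ i, x i < n := by
        intro i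
        have hm : x i ∈ L := List.get_mem L _
        rw [hLdef] at hm
        obtain ⟨j, -, hj⟩ := List.mem_flatMap.mp hm
        have := List.eq_of_mem_replicate hj
        rw [this]; exact j.isLt
      have hsupp : ∃ j1 j2 : Fin n, j1 ≠ j2 ∧ 0 < y j1 ∧ 0 < y j2 := by
        by_contra hcon
        push_neg at hcon
        obtain ⟨j0, hj0⟩ : ∃ j0, 0 < y j0 := by
          by_contra h0
          push_neg at h0
          have : ∑ j : Fin n, y j = 0 :=
            Finset.sum_eq_zero fun j _ => Nat.le_zero.mp (h0 j)
          omega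
        have hrest : ∀ j, j ≠ j0 → y j = 0 := fun j hj =>
          Nat.le_zero.mp (hcon j0 j (Ne.symm hj) hj0)
        refine hydelta j0 (funext fun j => ?_)
        by_cases hj : j = j0
        · subst hj
          have : ∑ j' : Fin n, y j' = y j := Finset.sum_eq_single j
            (fun b _ hb => hrest b hb) (fun h => absurd (Finset.mem_univ j) h)
          simp [hdelta, ← this, hsum]
        · simp [hdelta, hj, hrest j hj]
      obtain ⟨j1, j2, hj12, hy1, hy2⟩ := hsupp
      have hex : ∀ j : Fin n, 0 < y j → ∃ i, x i = (j : ℕ) := by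
        intro j hj
        rw [← hcount j] at hj
        obtain ⟨i, hi⟩ := Finset.card_pos.mp hj
        exact ⟨i, (Finset.mem_filter.mp hi).2⟩
      obtain ⟨i1, hi1⟩ := hex j1 hy1
      obtain ⟨i2, hi2⟩ := hex j2 hy2
      have hnc : ¬ ∃ c, ∀ i, x i = c := by
        rintro ⟨c, hc⟩
        exact hj12 (Fin.val_injective (by rw [← hi1, ← hi2, hc i1, hc i2]))
      have hni : ¬ Function.Injective x := by
        obtain ⟨j3, hj3⟩ : ∃ j, 2 ≤ y j := by
          by_contra hall
          push_neg at hall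
          refine hyones (funext fun j => ?_)
          show y j = 1
          by_contra hj
          have hj0 : y j = 0 := by have := hall j; omega
          have hsplit : ∑ j' : Fin n, y j' = y j + ∑ j' ∈ Finset.univ.erase j, y j' :=
            (Finset.add_sum_erase _ _ (Finset.mem_univ j)).symm
          have hle : ∑ j' ∈ Finset.univ.erase j, y j' ≤ ∑ _j' ∈ Finset.univ.erase j, 1 :=
            Finset.sum_le_sum fun j' _ => by have := hall j'; omega
          rw [Finset.sum_const, smul_eq_mul, mul_one,
            Finset.card_erase_of_mem (Finset.mem_univ j), Finset.card_univ,
            Fintype.card_fin] at hle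
          omega
        rw [← hcount j3] at hj3
        obtain ⟨a, ha, b, hb, hab⟩ := Finset.one_lt_card.mp hj3
        intro hinj
        exact hab (hinj ((Finset.mem_filter.mp ha).2.trans (Finset.mem_filter.mp hb).2.symm))
      exact ⟨x, ⟨hlt, hnc, hni⟩, funext hcount⟩
  rw [himg, Set.ncard_coe_finset, hT]
  have hEsub : E ⊆ Finset.Nat.antidiagonalTuple n n := by
    intro z hz
    rw [Finset.Nat.mem_antidiagonalTuple]
    rcases Finset.mem_insert.mp hz with h1 | h2
    · subst h1; simp [hones, Finset.card_univ]
    · obtain ⟨c, -, hc⟩ := Finset.mem_image.mp h2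
      subst hc; simp [hdelta, Finset.sum_ite_eq']
  have hEcard : E.card = n + 1 := by
    rw [hE, Finset.card_insert_of_notMem, Finset.card_image_of_injective _ ?_,
      Finset.card_univ, Fintype.card_fin]
    · intro c c' h
      have := congrFun h c
      simp only [hdelta, if_pos rfl] at this
      by_contra hcc
      rw [if_neg ?_] at this
      · omega
      · exact fun h' => hcc h'
    · intro hmem
      obtain ⟨c, -, hc⟩ := Finset.mem_image.mp hmem
      have := congrFun hc c
      simp [hdelta, hones] at this
      omega
  rw [Finset.card_sdiff_of_subset hEsub, card_antidiagonalTuple, hEcard]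
  have h2n : n + n - 1 = 2 * n - 1 := by omega
  rw [h2n]
  generalize (2 * n - 1).choose n = A
  omega
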